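/- Let w(v) = (1 + |v|²)^{β/2} e^{ϖ|v|²} with β > 3 and 0 < ϖ ≤ 1/8. Then there exists C > 0 such that for all measurable f, g : ℝ³ → ℝ with sup_v |w(v) f(v)/√μ(v)| < ∞ and sup_v |w(v) g(v)/√μ(v)| < ∞, the collision term Q(f,g)(v) is well defined for every v and sup_{v ∈ ℝ³} |ν(v)^{−1} w(v) Q(f,g)(v)/√μ(v)| ≤ C (sup_{v} |w(v) f(v)/√μ(v)|) (sup_{v} |w(v) g(v)/√μ(v)|). -/

import Mathlib

open Real MeasureTheory
open scoped RealInnerProductSpace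
open scoped Pointwise ENNReal

noncomputable section

/-- Velocity space `ℝ³`. -/
abbrev V := EuclideanSpace ℝ (Fin 3)

/-- Surface measure on the unit sphere `S² ⊂ ℝ³`. -/
def sphμ : Measure (Metric.sphere (0:V) 1) := (volume : Measure V).toSphere

/-- The normalized global Maxwellian `μ(v) = (2π)^{−3/2} e^{−|v|²/2}`. -/
def gaussM (v : V) : ℝ := (2 * π) ^ (-(3:ℝ)/2) * Real.exp (-‖v‖ ^ 2 / 2)

/-- Post-collisional velocity `v' = v − ((v−u)·ω)ω`. -/
def vPrime (v u : V) (ω : Metric.sphere (0:V) 1) : V := v - ⟪v - u, (ω : V)⟫ • (ω : V)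

/-- Post-collisional velocity `u' = u + ((v−u)·ω)ω`. -/
def uPrime (v u : V) (ω : Metric.sphere (0:V) 1) : V := u + ⟪v - u, (ω : V)⟫ • (ω : V)

/-- The hard-sphere Boltzmann collision operator. -/
def Qop (F₁ F₂ : V → ℝ) (v : V) : ℝ :=
  ∫ u : V, ∫ ω : Metric.sphere (0:V) 1,
    |⟪v - u, (ω : V)⟫| * (F₁ (uPrime v u ω) * F₂ (vPrime v u ω) - F₁ u * F₂ v) ∂sphμ

/-- The collision frequency `ν(v) = ∫∫ |(v−u)·ω| μ(u) dω du`. -/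
def collFreq (v : V) : ℝ :=
  ∫ u : V, (∫ ω : Metric.sphere (0:V) 1, |⟪v - u, (ω : V)⟫| ∂sphμ) * gaussM u

/-- The weight function `w(v) = (1+|v|²)^{β/2} e^{ϖ|v|²}`. -/
def wt (β ϖ : ℝ) (v : V) : ℝ := (1 + ‖v‖ ^ 2) ^ (β / 2) * Real.exp (ϖ * ‖v‖ ^ 2)

lemma gaussM_pos (v : V) : 0 < gaussM v := by
  unfold gaussM; positivity

def sqm (v : V) : ℝ := Real.sqrt (gaussM v)

lemma sqm_pos (v : V) : 0 < sqm v := Real.sqrt_pos.mpr (gaussM_pos v)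

lemma sqm_eq (v : V) : sqm v = Real.sqrt ((2*π) ^ (-(3:ℝ)/2)) * Real.exp (-‖v‖^2/4) := by
  unfold sqm gaussM
  rw [Real.sqrt_mul (by positivity)]
  congr 1
  rw [show Real.exp (-‖v‖^2/2) = (Real.exp (-‖v‖^2/4))^2 by
    rw [← Real.exp_nat_mul]; ring_nf]
  exact Real.sqrt_sq (Real.exp_pos _).le

lemma energy (v u : V) (ω : Metric.sphere (0:V) 1) :
    ‖uPrime v u ω‖^2 + ‖vPrime v u ω‖^2 = ‖u‖^2 + ‖v‖^2 := by
  have hω : ‖(ω:V)‖ = 1 := mem_sphere_zero_iff_norm.mp ω.2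
  set c : ℝ := ⟪v - u, (ω:V)⟫ with hc
  have h1 : ‖uPrime v u ω‖^2 = ‖u‖^2 + 2 * (c * ⟪u, (ω:V)⟫) + c^2 := by
    rw [uPrime, norm_add_sq_real, real_inner_smul_right, norm_smul, hω, mul_one,
      Real.norm_eq_abs, sq_abs, ← hc]
  have h2 : ‖vPrime v u ω‖^2 = ‖v‖^2 - 2 * (c * ⟪v, (ω:V)⟫) + c^2 := by
    rw [vPrime, norm_sub_sq_real, real_inner_smul_right, norm_smul, hω, mul_one,
      Real.norm_eq_abs, sq_abs, ← hc]
  have h3 : c * ⟪v,(ω:V)⟫ - c * ⟪u,(ω:V)⟫ = c^2 := by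
    rw [← mul_sub, ← inner_sub_left, ← hc, sq]
  rw [h1, h2]; ring_nf; linarith [h3]

lemma gaussM_mul (v u : V) (ω : Metric.sphere (0:V) 1) :
    gaussM (uPrime v u ω) * gaussM (vPrime v u ω) = gaussM u * gaussM v := by
  have e : ∀ a b : ℝ, ((2*π)^(-(3:ℝ)/2) * rexp (-a/2)) * ((2*π)^(-(3:ℝ)/2) * rexp (-b/2))
      = ((2*π)^(-(3:ℝ)/2))^2 * rexp (-(a+b)/2) := by
    intro a b
    rw [mul_mul_mul_comm, ← Real.exp_add, ← sq]
    congr 1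
    ring
  unfold gaussM
  rw [e, e, energy v u ω]

lemma sqm_mul (v u : V) (ω : Metric.sphere (0:V) 1) :
    sqm (uPrime v u ω) * sqm (vPrime v u ω) = sqm u * sqm v := by
  unfold sqm
  rw [← Real.sqrt_mul (gaussM_pos _).le, ← Real.sqrt_mul (gaussM_pos _).le, gaussM_mul]


lemma one_le_wt {β ϖ : ℝ} (hβ : 0 ≤ β) (hϖ : 0 ≤ ϖ) (v : V) : 1 ≤ wt β ϖ v := by
  unfold wt
  have h1 : (1:ℝ) ≤ (1 + ‖v‖^2) ^ (β/2) :=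
    Real.one_le_rpow (by nlinarith [sq_nonneg ‖v‖]) (by linarith)
  have h2 : (1:ℝ) ≤ rexp (ϖ*‖v‖^2) := by
    rw [← Real.exp_zero]
    exact Real.exp_le_exp.mpr (by positivity)
  nlinarith

lemma wt_pos {β ϖ : ℝ} (hβ : 0 ≤ β) (hϖ : 0 ≤ ϖ) (v : V) : 0 < wt β ϖ v :=
  lt_of_lt_of_le one_pos (one_le_wt hβ hϖ v)

lemma wt_le_mul {β ϖ : ℝ} (hβ : 0 ≤ β) (hϖ : 0 ≤ ϖ) (v u : V) (ω : Metric.sphere (0:V) 1) :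
    wt β ϖ v ≤ wt β ϖ (uPrime v u ω) * wt β ϖ (vPrime v u ω) := by
  have hE := energy v u ω
  have ha : (0:ℝ) ≤ ‖uPrime v u ω‖^2 := sq_nonneg _
  have hb : (0:ℝ) ≤ ‖vPrime v u ω‖^2 := sq_nonneg _
  have hv : ‖v‖^2 ≤ ‖uPrime v u ω‖^2 + ‖vPrime v u ω‖^2 := by nlinarith [sq_nonneg ‖u‖]
  unfold wt
  rw [mul_mul_mul_comm]
  have h1 : (1+‖v‖^2)^(β/2) ≤ (1+‖uPrime v u ω‖^2)^(β/2) * (1+‖vPrime v u ω‖^2)^(β/2) := by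
    rw [← Real.mul_rpow (by nlinarith) (by nlinarith)]
    exact Real.rpow_le_rpow (by positivity) (by nlinarith) (by linarith)
  have h2 : rexp (ϖ*‖v‖^2) ≤ rexp (ϖ*‖uPrime v u ω‖^2) * rexp (ϖ*‖vPrime v u ω‖^2) := by
    rw [← Real.exp_add]
    exact Real.exp_le_exp.mpr (by nlinarith)
  exact mul_le_mul h1 h2 (Real.exp_pos _).le (by positivity)

lemma sphere_norm_one (ω : Metric.sphere (0:V) 1) : ‖(ω:V)‖ = 1 :=
  mem_sphere_zero_iff_norm.mp ω.2

def sMap (R : V ≃ₗᵢ[ℝ] V) (ω : Metric.sphere (0:V) 1) : Metric.sphere (0:V) 1 :=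
  ⟨R ω, by
    rw [mem_sphere_zero_iff_norm, R.norm_map]
    exact sphere_norm_one ω⟩

lemma continuous_sMap (R : V ≃ₗᵢ[ℝ] V) : Continuous (sMap R) :=
  Continuous.subtype_mk (R.continuous.comp continuous_subtype_val) _

lemma sMap_image_coe (R : V ≃ₗᵢ[ℝ] V) (s : Set (Metric.sphere (0:V) 1)) :
    (Subtype.val '' (sMap R ⁻¹' s) : Set V) = ⇑R ⁻¹' (Subtype.val '' s) := by
  ext x
  constructor
  · rintro ⟨ω, hω, rfl⟩
    exact ⟨sMap R ω, hω, rfl⟩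
  · rintro ⟨ω', hω', hx⟩
    have hxs : x ∈ Metric.sphere (0:V) 1 := by
      rw [mem_sphere_zero_iff_norm, ← R.norm_map x, ← hx]
      exact sphere_norm_one ω'
    refine ⟨⟨x, hxs⟩, ?_, rfl⟩
    have h2 : sMap R ⟨x, hxs⟩ = ω' := Subtype.ext (by simpa [sMap] using hx.symm)
    rw [Set.mem_preimage, h2]
    exact hω'

lemma smul_preimage (R : V ≃ₗᵢ[ℝ] V) (A : Set V) :
    Set.Ioo (0:ℝ) 1 • (⇑R ⁻¹' A) = ⇑R ⁻¹' (Set.Ioo (0:ℝ) 1 • A) := by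
  ext x
  rw [Set.mem_preimage, Set.mem_smul, Set.mem_smul]
  constructor
  · rintro ⟨c, hc, y, hy, rfl⟩
    exact ⟨c, hc, R y, hy, (R.map_smul c y).symm⟩
  · rintro ⟨c, hc, y, hy, hxy⟩
    refine ⟨c, hc, R.symm y, by simpa using hy, ?_⟩
    have := congrArg (⇑R.symm) hxy
    simpa using this

lemma sphμ_map (R : V ≃ₗᵢ[ℝ] V) : Measure.map (sMap R) sphμ = sphμ := by
  ext s hs
  rw [Measure.map_apply (continuous_sMap R).measurable hs]
  unfold sphμ
  rw [Measure.toSphere_apply' _ hs,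
    Measure.toSphere_apply' _ ((continuous_sMap R).measurable hs)]
  congr 1
  rw [sMap_image_coe, smul_preimage]
  exact (R.measurePreserving).measure_preimage_emb (R.toHomeomorph.measurableEmbedding) _

lemma integral_sMap (R : V ≃ₗᵢ[ℝ] V) (F : Metric.sphere (0:V) 1 → ℝ)
    (hF : AEStronglyMeasurable F sphμ) :
    ∫ ω, F (sMap R ω) ∂sphμ = ∫ ω, F ω ∂sphμ := by
  conv_rhs => rw [← sphμ_map R]
  rw [integral_map (continuous_sMap R).measurable.aemeasurable]
  rwa [sphμ_map R]

instance : IsFiniteMeasure sphμ := by unfold sphμ; infer_instance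

lemma integrable_sph_of_bounded {F : Metric.sphere (0:V) 1 → ℝ}
    (hm : AEStronglyMeasurable F sphμ) (c : ℝ) (h : ∀ ω, |F ω| ≤ c) : Integrable F sphμ :=
  Integrable.mono' (integrable_const c) hm
    (Filter.Eventually.of_forall (fun ω => by simpa using h ω))



def eV : V := EuclideanSpace.single 0 1

lemma eV_norm : ‖eV‖ = 1 := by simp [eV, EuclideanSpace.norm_single]

def κ : ℝ := ∫ ω, |⟪eV, (ω:V)⟫| ∂sphμ

lemma cont_inner_sph (z : V) :
    Continuous (fun ω : Metric.sphere (0:V) 1 => ⟪z, (ω:V)⟫) :=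
  Continuous.inner continuous_const continuous_subtype_val

lemma integral_inner_abs_unit {e : V} (he : ‖e‖ = 1) :
    ∫ ω, |⟪e, (ω:V)⟫| ∂sphμ = κ := by
  set R : V ≃ₗᵢ[ℝ] V := Submodule.reflection (ℝ ∙ (e - eV))ᗮ with hR
  have hRe : R e = eV := Submodule.reflection_sub (by rw [he, eV_norm])
  have step1 : ∫ ω, |⟪e, (ω:V)⟫| ∂sphμ = ∫ ω, |⟪eV, ((sMap R ω : Metric.sphere (0:V) 1) : V)⟫| ∂sphμ := by
    refine integral_congr_ae (Filter.Eventually.of_forall fun ω => ?_)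
    have h : |⟪e, (ω:V)⟫| = |⟪eV, R (ω:V)⟫| := by rw [← hRe, R.inner_map_map]
    exact h
  rw [step1, integral_sMap R (fun ω => |⟪eV, (ω:V)⟫|)
    ((cont_inner_sph eV).abs.aestronglyMeasurable)]
  rfl

lemma Ksph (z : V) : ∫ ω, |⟪z, (ω:V)⟫| ∂sphμ = κ * ‖z‖ := by
  rcases eq_or_ne z 0 with rfl | hz
  · simp
  · have hnz : ‖z‖ ≠ 0 := norm_ne_zero_iff.mpr hz
    have he : ‖(‖z‖⁻¹ • z)‖ = 1 := by
      rw [norm_smul, Real.norm_eq_abs, abs_inv, abs_norm]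
      field_simp
    have hpt : ∀ ω : Metric.sphere (0:V) 1, |⟪z, (ω:V)⟫| = ‖z‖ * |⟪‖z‖⁻¹ • z, (ω:V)⟫| := by
      intro ω
      rw [real_inner_smul_left, abs_mul, abs_inv, abs_norm]
      field_simp
    calc ∫ ω, |⟪z,(ω:V)⟫| ∂sphμ = ∫ ω, ‖z‖ * |⟪‖z‖⁻¹ • z,(ω:V)⟫| ∂sphμ := by
          exact integral_congr_ae (Filter.Eventually.of_forall fun ω => hpt ω)
      _ = ‖z‖ * ∫ ω, |⟪‖z‖⁻¹ • z,(ω:V)⟫| ∂sphμ := integral_const_mul _ _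
      _ = ‖z‖ * κ := by rw [integral_inner_abs_unit he]
      _ = κ * ‖z‖ := mul_comm _ _

def σS : ℝ := (sphμ Set.univ).toReal

lemma σS_pos : 0 < σS := by
  unfold σS sphμ
  rw [Measure.toSphere_apply_univ]
  refine ENNReal.toReal_pos ?_ ?_
  · refine mul_ne_zero ?_ ?_
    · simp [finrank_euclideanSpace_fin]
    · exact (Metric.measure_ball_pos volume (0:V) one_pos).ne'
  · exact ENNReal.mul_ne_top (ENNReal.natCast_ne_top _) measure_ball_lt_top.ne

lemma integral_inner_sq_unit {e : V} (he : ‖e‖ = 1) :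
    ∫ ω, ⟪e,(ω:V)⟫^2 ∂sphμ = ∫ ω, ⟪eV,(ω:V)⟫^2 ∂sphμ := by
  set R : V ≃ₗᵢ[ℝ] V := Submodule.reflection (ℝ ∙ (e - eV))ᗮ with hR
  have hRe : R e = eV := Submodule.reflection_sub (by rw [he, eV_norm])
  have step1 : ∫ ω, ⟪e, (ω:V)⟫^2 ∂sphμ = ∫ ω, ⟪eV, ((sMap R ω : Metric.sphere (0:V) 1) : V)⟫^2 ∂sphμ := by
    refine integral_congr_ae (Filter.Eventually.of_forall fun ω => ?_)
    have h : ⟪e, (ω:V)⟫^2 = ⟪eV, R (ω:V)⟫^2 := by rw [← hRe, R.inner_map_map]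
    exact h
  rw [step1, integral_sMap R (fun ω => ⟪eV, (ω:V)⟫^2)
    (((cont_inner_sph eV).pow 2).aestronglyMeasurable)]

lemma abs_inner_sph_le (z : V) (hz : ‖z‖ = 1) (ω : Metric.sphere (0:V) 1) :
    |⟪z, (ω:V)⟫| ≤ 1 := by
  have := abs_real_inner_le_norm z (ω:V)
  rwa [hz, sphere_norm_one ω, one_mul] at this

lemma integrable_inner_sq (z : V) (hz : ‖z‖ = 1) :
    Integrable (fun ω : Metric.sphere (0:V) 1 => ⟪z,(ω:V)⟫^2) sphμ := by
  refine integrable_sph_of_bounded ((cont_inner_sph z).pow 2).aestronglyMeasurable 1 fun ω => ?_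
  have h := abs_inner_sph_le z hz ω
  rw [abs_pow, sq]
  nlinarith [abs_nonneg (⟪z,(ω:V)⟫)]

lemma sum_sq_eq : ∑ i : Fin 3, ∫ ω, ⟪(EuclideanSpace.single i (1:ℝ) : V),(ω:V)⟫^2 ∂sphμ = σS := by
  rw [← integral_finset_sum]
  · have hpt : ∀ ω : Metric.sphere (0:V) 1,
        ∑ i : Fin 3, ⟪(EuclideanSpace.single i (1:ℝ) : V),(ω:V)⟫^2 = 1 := by
      intro ω
      have h1 : ∀ i : Fin 3, ⟪(EuclideanSpace.single i (1:ℝ) : V),(ω:V)⟫ = (ω:V) i := by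
        intro i
        rw [EuclideanSpace.inner_single_left]
        simp
      calc ∑ i : Fin 3, ⟪(EuclideanSpace.single i (1:ℝ) : V),(ω:V)⟫^2
          = ∑ i : Fin 3, ((ω:V) i) * ((ω:V) i) := by
            refine Finset.sum_congr rfl fun i _ => ?_
            rw [h1 i, sq]
        _ = ⟪(ω:V), (ω:V)⟫ := by
            rw [PiLp.inner_apply]
            simp [RCLike.inner_apply, sq]
        _ = 1 := by rw [real_inner_self_eq_norm_sq, sphere_norm_one]; norm_num
    rw [integral_congr_ae (Filter.Eventually.of_forall hpt), integral_const]
    simp [σS, smul_eq_mul, measureReal_def]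
  · intro i _
    exact integrable_inner_sq _ (by simp [EuclideanSpace.norm_single])



lemma κ_pos : 0 < κ := by
  have hall : ∀ i : Fin 3, ∫ ω, ⟪(EuclideanSpace.single i (1:ℝ) : V),(ω:V)⟫^2 ∂sphμ
      = ∫ ω, ⟪eV,(ω:V)⟫^2 ∂sphμ :=
    fun i => integral_inner_sq_unit (by simp [EuclideanSpace.norm_single])
  have hsum := sum_sq_eq
  rw [Finset.sum_congr rfl (fun i _ => hall i), Finset.sum_const, Finset.card_univ] at hsum
  simp only [Fintype.card_fin, nsmul_eq_mul, Nat.cast_ofNat] at hsum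
  have hle : ∫ ω, ⟪eV,(ω:V)⟫^2 ∂sphμ ≤ κ := by
    refine integral_mono (integrable_inner_sq eV eV_norm) ?_ ?_
    · exact integrable_sph_of_bounded (cont_inner_sph eV).abs.aestronglyMeasurable 1
        (fun ω => by rw [abs_abs]; exact abs_inner_sph_le eV eV_norm ω)
    · intro ω
      have h := abs_inner_sph_le eV eV_norm ω
      show ⟪eV,(ω:V)⟫^2 ≤ |⟪eV,(ω:V)⟫|
      nlinarith [abs_nonneg (⟪eV,(ω:V)⟫), sq_abs (⟪eV,(ω:V)⟫)]
  have := σS_pos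
  linarith

lemma integrable_gaussV {b : ℝ} (hb : 0 < b) :
    Integrable (fun u : V => rexp (-(b * ‖u‖^2))) := by
  have h := (GaussianFourier.integrable_cexp_neg_mul_sq_norm_add (b := (b:ℂ))
      (by simpa using hb) 0 (0:V)).norm
  refine h.congr (Filter.Eventually.of_forall fun u => ?_)
  simp only [Complex.norm_exp]
  congr 1
  simp [Complex.add_re, Complex.mul_re]
  left
  rw [← Complex.ofReal_pow, Complex.ofReal_re]

lemma key_lin {b : ℝ} (hb : 0 < b) (t : ℝ) (ht : 0 ≤ t) :
    t ≤ Real.sqrt (2/b) * rexp (b/2 * t^2) := by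
  set a := Real.sqrt (b/2) with ha
  have ha2 : a^2 = b/2 := Real.sq_sqrt (by positivity)
  have hap : 0 < a := Real.sqrt_pos.mpr (by positivity)
  have hexp : b/2 * t^2 + 1 ≤ rexp (b/2 * t^2) := by
    have := Real.add_one_le_exp (b/2 * t^2)
    linarith
  have h2 : a * t ≤ b/2 * t^2 + 1 := by nlinarith [sq_nonneg (a*t - 1)]
  have h3 : Real.sqrt (2/b) = a⁻¹ := by
    rw [ha, ← Real.sqrt_inv]
    congr 1
    field_simp
  rw [h3]
  have h4 : a * t ≤ rexp (b/2*t^2) := le_trans h2 hexp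
  calc t = a⁻¹ * (a * t) := by field_simp
    _ ≤ a⁻¹ * rexp (b/2*t^2) := mul_le_mul_of_nonneg_left h4 (by positivity)

lemma integrable_norm_gaussV {b : ℝ} (hb : 0 < b) :
    Integrable (fun u : V => ‖u‖ * rexp (-(b*‖u‖^2))) := by
  have hb2 : 0 < b/2 := by positivity
  refine Integrable.mono' ((integrable_gaussV hb2).const_mul (Real.sqrt (2/b)))
    (Continuous.aestronglyMeasurable (by continuity)) (Filter.Eventually.of_forall fun u => ?_)
  have hkey := key_lin hb ‖u‖ (norm_nonneg u)
  have hpos : (0:ℝ) < rexp (-(b*‖u‖^2)) := Real.exp_pos _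
  have : ‖u‖ * rexp (-(b*‖u‖^2)) ≤ Real.sqrt (2/b) * rexp (b/2*‖u‖^2) * rexp (-(b*‖u‖^2)) := by
    exact mul_le_mul_of_nonneg_right hkey hpos.le
  rw [Real.norm_eq_abs, abs_of_nonneg (by positivity)]
  refine this.trans (le_of_eq ?_)
  rw [mul_assoc, ← Real.exp_add]
  congr 2
  ring

lemma integrable_shift_gauss (v : V) {b : ℝ} (hb : 0 < b) :
    Integrable (fun u : V => ‖v - u‖ * rexp (-(b*‖u‖^2))) := by
  refine Integrable.mono' (((integrable_gaussV hb).const_mul ‖v‖).add (integrable_norm_gaussV hb))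
    (Continuous.aestronglyMeasurable (by continuity)) (Filter.Eventually.of_forall fun u => ?_)
  rw [Real.norm_eq_abs, abs_of_nonneg (by positivity)]
  have h1 : ‖v - u‖ ≤ ‖v‖ + ‖u‖ := norm_sub_le v u
  have hpos : (0:ℝ) < rexp (-(b*‖u‖^2)) := Real.exp_pos _
  simp only [Pi.add_apply]
  nlinarith

lemma integrable_smul_gauss {b : ℝ} (hb : 0 < b) :
    Integrable (fun u : V => rexp (-(b*‖u‖^2)) • u) := by
  refine Integrable.mono' (integrable_norm_gaussV hb)
    (Continuous.aestronglyMeasurable (by fun_prop)) (Filter.Eventually.of_forall fun u => ?_)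
  rw [norm_smul, Real.norm_eq_abs, abs_of_nonneg (Real.exp_pos _).le, mul_comm]

lemma integral_smul_gauss_zero {b : ℝ} (hb : 0 < b) :
    ∫ u : V, rexp (-(b*‖u‖^2)) • u = 0 := by
  have hneg : MeasurePreserving (fun u : V => -u) volume volume :=
    Measure.measurePreserving_neg _
  have hemb : MeasurableEmbedding (fun u : V => -u) :=
    (Homeomorph.neg V).measurableEmbedding
  have h := hneg.integral_comp hemb (fun u : V => rexp (-(b*‖u‖^2)) • u)
  have h2 : ∫ u : V, rexp (-(b*‖-u‖^2)) • (-u) = ∫ u : V, rexp (-(b*‖u‖^2)) • u := h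
  have h3 : ∫ u : V, rexp (-(b*‖-u‖^2)) • (-u) = - ∫ u : V, rexp (-(b*‖u‖^2)) • u := by
    rw [← integral_neg]
    refine integral_congr_ae (Filter.Eventually.of_forall fun u => ?_)
    show rexp (-(b*‖-u‖^2)) • -u = -(rexp (-(b*‖u‖^2)) • u)
    rw [norm_neg, smul_neg]
  have h4 := h2.symm.trans h3
  have h5 : (∫ u : V, rexp (-(b*‖u‖^2)) • u) + (∫ u : V, rexp (-(b*‖u‖^2)) • u) = 0 := by
    nth_rewrite 2 [h4]
    exact add_neg_cancel _
  rw [← two_smul ℝ] at h5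
  simpa using (smul_eq_zero.mp h5).resolve_left (by norm_num)



def Z2 : ℝ := ∫ u : V, rexp (-((2:ℝ)⁻¹*‖u‖^2))
def M2 : ℝ := ∫ u : V, ‖u‖ * rexp (-((2:ℝ)⁻¹*‖u‖^2))
def Z4 : ℝ := ∫ u : V, rexp (-((4:ℝ)⁻¹*‖u‖^2))
def M4 : ℝ := ∫ u : V, ‖u‖ * rexp (-((4:ℝ)⁻¹*‖u‖^2))
def Hfun (v : V) : ℝ := ∫ u : V, ‖v - u‖ * rexp (-((2:ℝ)⁻¹*‖u‖^2))
def Gfun (v : V) : ℝ := ∫ u : V, ‖v - u‖ * rexp (-((4:ℝ)⁻¹*‖u‖^2))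

lemma half_pos' : (0:ℝ) < (2:ℝ)⁻¹ := by norm_num
lemma quarter_pos' : (0:ℝ) < (4:ℝ)⁻¹ := by norm_num

lemma Z2_pos : 0 < Z2 := by
  unfold Z2
  rw [integral_pos_iff_support_of_nonneg (Pi.le_def.mpr fun u => (Real.exp_pos _).le)
    (integrable_gaussV half_pos')]
  have hs : Function.support (fun u : V => rexp (-((2:ℝ)⁻¹*‖u‖^2))) = Set.univ := by
    ext u
    simp [Function.mem_support, (Real.exp_pos _).ne']
  rw [hs]
  calc (0:ℝ≥0∞) < volume (Metric.ball (0:V) 1) := Metric.measure_ball_pos volume 0 one_pos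
    _ ≤ volume (Set.univ : Set V) := measure_mono (Set.subset_univ _)

lemma M2_pos : 0 < M2 := by
  unfold M2
  rw [integral_pos_iff_support_of_nonneg (Pi.le_def.mpr fun u => by positivity)
    (integrable_norm_gaussV half_pos')]
  have hs : Function.support (fun u : V => ‖u‖ * rexp (-((2:ℝ)⁻¹*‖u‖^2))) = {(0:V)}ᶜ := by
    ext u
    simp [Function.mem_support, mul_ne_zero_iff, (Real.exp_pos _).ne', norm_ne_zero_iff]
  rw [hs]
  calc (0:ℝ≥0∞) < volume (Metric.ball eV 2⁻¹) := Metric.measure_ball_pos volume eV (by norm_num)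
    _ ≤ volume ({(0:V)}ᶜ : Set V) := by
        refine measure_mono fun x hx => ?_
        simp only [Set.mem_compl_iff, Set.mem_singleton_iff]
        intro h0
        rw [h0, Metric.mem_ball, dist_zero_left, eV_norm] at hx
        norm_num at hx

lemma Z4_pos : 0 < Z4 := by
  unfold Z4
  rw [integral_pos_iff_support_of_nonneg (Pi.le_def.mpr fun u => (Real.exp_pos _).le)
    (integrable_gaussV quarter_pos')]
  have hs : Function.support (fun u : V => rexp (-((4:ℝ)⁻¹*‖u‖^2))) = Set.univ := by
    ext u
    simp [Function.mem_support, (Real.exp_pos _).ne']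
  rw [hs]
  calc (0:ℝ≥0∞) < volume (Metric.ball (0:V) 1) := Metric.measure_ball_pos volume 0 one_pos
    _ ≤ volume (Set.univ : Set V) := measure_mono (Set.subset_univ _)
lemma M4_nonneg : 0 ≤ M4 := integral_nonneg (fun u => by positivity)

lemma Hfun_ge_norm (v : V) : ‖v‖ * Z2 ≤ Hfun v := by
  have hZnn : 0 ≤ Z2 := le_of_lt Z2_pos
  have heq : (fun u : V => rexp (-((2:ℝ)⁻¹*‖u‖^2)) • (v - u))
      = fun u : V => (rexp (-((2:ℝ)⁻¹*‖u‖^2))) • v - (rexp (-((2:ℝ)⁻¹*‖u‖^2))) • u := by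
    funext u; rw [smul_sub]
  have hint : Integrable (fun u : V => rexp (-((2:ℝ)⁻¹*‖u‖^2)) • (v - u)) := by
    rw [heq]
    exact ((integrable_gaussV half_pos').smul_const v).sub (integrable_smul_gauss half_pos')
  have hval : ∫ u : V, rexp (-((2:ℝ)⁻¹*‖u‖^2)) • (v - u) = Z2 • v := by
    rw [heq, integral_sub ((integrable_gaussV half_pos').smul_const v)
      (integrable_smul_gauss half_pos'), integral_smul_const,
      integral_smul_gauss_zero half_pos', sub_zero]
    rfl
  calc ‖v‖ * Z2 = ‖Z2 • v‖ := by
        rw [norm_smul, Real.norm_eq_abs, abs_of_nonneg hZnn, mul_comm]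
    _ = ‖∫ u : V, rexp (-((2:ℝ)⁻¹*‖u‖^2)) • (v - u)‖ := by rw [hval]
    _ ≤ ∫ u : V, ‖rexp (-((2:ℝ)⁻¹*‖u‖^2)) • (v - u)‖ := norm_integral_le_integral_norm _
    _ = Hfun v := by
        refine integral_congr_ae (Filter.Eventually.of_forall fun u => ?_)
        show ‖rexp (-((2:ℝ)⁻¹*‖u‖^2)) • (v - u)‖ = ‖v - u‖ * rexp (-((2:ℝ)⁻¹*‖u‖^2))
        rw [norm_smul, Real.norm_eq_abs, abs_of_nonneg (Real.exp_pos _).le, mul_comm]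

lemma Hfun_ge_M (v : V) : M2 - ‖v‖ * Z2 ≤ Hfun v := by
  have hint1 : Integrable (fun u : V => ‖u‖ * rexp (-((2:ℝ)⁻¹*‖u‖^2))
      - ‖v‖ * rexp (-((2:ℝ)⁻¹*‖u‖^2))) :=
    (integrable_norm_gaussV half_pos').sub ((integrable_gaussV half_pos').const_mul ‖v‖)
  have hmono := integral_mono hint1 (integrable_shift_gauss v half_pos') (fun u => by
    show ‖u‖ * rexp (-((2:ℝ)⁻¹*‖u‖^2)) - ‖v‖ * rexp (-((2:ℝ)⁻¹*‖u‖^2))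
      ≤ ‖v - u‖ * rexp (-((2:ℝ)⁻¹*‖u‖^2))
    have h1 : ‖u‖ - ‖v‖ ≤ ‖v - u‖ := by
      rw [norm_sub_rev]
      exact norm_sub_norm_le u v
    have h2 : (0:ℝ) < rexp (-((2:ℝ)⁻¹*‖u‖^2)) := Real.exp_pos _
    nlinarith)
  rw [integral_sub (integrable_norm_gaussV half_pos')
    ((integrable_gaussV half_pos').const_mul ‖v‖), integral_const_mul] at hmono
  exact hmono

lemma Hfun_ge_half (v : V) : M2/2 ≤ Hfun v := by
  rcases le_or_gt (‖v‖ * Z2) (M2/2) with h | h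
  · linarith [Hfun_ge_M v]
  · linarith [Hfun_ge_norm v]

lemma Hfun_pos (v : V) : 0 < Hfun v := lt_of_lt_of_le (by linarith [M2_pos]) (Hfun_ge_half v)

lemma Gfun_le (v : V) : Gfun v ≤ ‖v‖ * Z4 + M4 := by
  have hint2 : Integrable (fun u : V => ‖v‖ * rexp (-((4:ℝ)⁻¹*‖u‖^2))
      + ‖u‖ * rexp (-((4:ℝ)⁻¹*‖u‖^2))) :=
    ((integrable_gaussV quarter_pos').const_mul ‖v‖).add (integrable_norm_gaussV quarter_pos')
  have hmono := integral_mono (integrable_shift_gauss v quarter_pos') hint2 (fun u => by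
    show ‖v - u‖ * rexp (-((4:ℝ)⁻¹*‖u‖^2))
      ≤ ‖v‖ * rexp (-((4:ℝ)⁻¹*‖u‖^2)) + ‖u‖ * rexp (-((4:ℝ)⁻¹*‖u‖^2))
    have h1 : ‖v - u‖ ≤ ‖v‖ + ‖u‖ := norm_sub_le v u
    have h2 : (0:ℝ) < rexp (-((4:ℝ)⁻¹*‖u‖^2)) := Real.exp_pos _
    nlinarith)
  rw [integral_add ((integrable_gaussV quarter_pos').const_mul ‖v‖)
    (integrable_norm_gaussV quarter_pos'), integral_const_mul] at hmono
  exact hmono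

def Crat : ℝ := Z4/Z2 + 2*M4/M2

lemma Gfun_le_Hfun (v : V) : Gfun v ≤ Crat * Hfun v := by
  have h1 := Hfun_ge_norm v
  have h2 := Hfun_ge_half v
  have hZ2 := Z2_pos
  have hM2 := M2_pos
  have hZ4 := Z4_pos.le
  have hM4 := M4_nonneg
  have e1 : ‖v‖ * Z4 = (Z4/Z2) * (‖v‖ * Z2) := by field_simp
  have e2 : M4 = (2*M4/M2) * (M2/2) := by field_simp
  have h3 : (Z4/Z2) * (‖v‖ * Z2) ≤ (Z4/Z2) * Hfun v :=
    mul_le_mul_of_nonneg_left h1 (div_nonneg hZ4 hZ2.le)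
  have h4 : (2*M4/M2) * (M2/2) ≤ (2*M4/M2) * Hfun v :=
    mul_le_mul_of_nonneg_left h2 (div_nonneg (by linarith) hM2.le)
  calc Gfun v ≤ ‖v‖ * Z4 + M4 := Gfun_le v
    _ = (Z4/Z2) * (‖v‖ * Z2) + (2*M4/M2) * (M2/2) := by rw [← e1, ← e2]
    _ ≤ (Z4/Z2) * Hfun v + (2*M4/M2) * Hfun v := add_le_add h3 h4
    _ = Crat * Hfun v := by unfold Crat; ring

lemma Crat_pos : 0 < Crat := by
  have h1 : 0 < Z4/Z2 := div_pos Z4_pos Z2_pos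
  have h2 : 0 ≤ 2*M4/M2 := div_nonneg (by linarith [M4_nonneg]) M2_pos.le
  unfold Crat
  linarith

lemma collFreq_eq (v : V) : collFreq v = (κ * (2*π) ^ (-(3:ℝ)/2)) * Hfun v := by
  unfold collFreq
  calc ∫ u : V, (∫ ω : Metric.sphere (0:V) 1, |⟪v - u, (ω : V)⟫| ∂sphμ) * gaussM u
      = ∫ u : V, (κ * (2*π) ^ (-(3:ℝ)/2)) * (‖v - u‖ * rexp (-((2:ℝ)⁻¹*‖u‖^2))) := by
        refine integral_congr_ae (Filter.Eventually.of_forall fun u => ?_)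
        show (∫ ω : Metric.sphere (0:V) 1, |⟪v - u, (ω : V)⟫| ∂sphμ) * gaussM u = _
        rw [Ksph (v-u)]
        unfold gaussM
        have harg : -‖u‖^2/2 = -((2:ℝ)⁻¹*‖u‖^2) := by ring
        rw [harg]
        ring
    _ = (κ * (2*π) ^ (-(3:ℝ)/2)) * Hfun v := integral_const_mul _ _

lemma collFreq_pos (v : V) : 0 < collFreq v := by
  rw [collFreq_eq]
  have h1 := κ_pos
  have h2 : (0:ℝ) < (2*π) ^ (-(3:ℝ)/2) := Real.rpow_pos_of_pos (by positivity) _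
  have h3 := Hfun_pos v
  positivity



lemma sqm_eq4 (u : V) : sqm u = Real.sqrt ((2*π) ^ (-(3:ℝ)/2)) * rexp (-((4:ℝ)⁻¹*‖u‖^2)) := by
  rw [sqm_eq]
  have : -‖u‖^2/4 = -((4:ℝ)⁻¹*‖u‖^2) := by ring
  rw [this]

lemma integrable_abs_inner_sph (z : V) :
    Integrable (fun ω : Metric.sphere (0:V) 1 => |⟪z, (ω:V)⟫|) sphμ := by
  refine integrable_sph_of_bounded (cont_inner_sph z).abs.aestronglyMeasurable ‖z‖ fun ω => ?_
  rw [abs_abs]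
  have := abs_real_inner_le_norm z (ω:V)
  rwa [sphere_norm_one, mul_one] at this

/-- Weighted `L^∞` bound for the nonlinear collision operator:
`‖ν⁻¹ w Q(f,g)/√μ‖_{L^∞} ≤ C ‖w f/√μ‖_{L^∞} ‖w g/√μ‖_{L^∞}`,
together with pointwise well-definedness of `Q(f,g)`. -/
theorem stmt8 (β ϖ : ℝ) (hβ : 3 < β) (hϖ0 : 0 < ϖ) (hϖ : ϖ ≤ 1/8) :
    ∃ C > (0:ℝ), ∀ f g : V → ℝ, ∀ Mf Mg : ℝ,
      Measurable f → Measurable g →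
      (∀ v, |wt β ϖ v * f v| ≤ Mf * Real.sqrt (gaussM v)) →
      (∀ v, |wt β ϖ v * g v| ≤ Mg * Real.sqrt (gaussM v)) →
      (∀ v : V, Integrable
        (fun p : V × Metric.sphere (0:V) 1 =>
          |⟪v - p.1, (p.2 : V)⟫| *
            (f (uPrime v p.1 p.2) * g (vPrime v p.1 p.2) - f p.1 * g v))
        ((volume : Measure V).prod sphμ)) ∧
      ∀ v : V, |(collFreq v)⁻¹ * wt β ϖ v * Qop f g v / Real.sqrt (gaussM v)| ≤ C * Mf * Mg := by
  classical
  have hc2p : (0:ℝ) < (2*π) ^ (-(3:ℝ)/2) := Real.rpow_pos_of_pos (by positivity) _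
  have hc4p : (0:ℝ) < Real.sqrt ((2*π) ^ (-(3:ℝ)/2)) := Real.sqrt_pos.mpr hc2p
  have hCr := Crat_pos
  have hκ := κ_pos
  refine ⟨2 * Real.sqrt ((2*π) ^ (-(3:ℝ)/2)) * Crat / (2*π) ^ (-(3:ℝ)/2), by positivity, ?_⟩
  intro f g Mf Mg hf hg hbf hbg
  have hβ0 : (0:ℝ) ≤ β := by linarith
  have hϖ0' : (0:ℝ) ≤ ϖ := hϖ0.le
  have hbf' : ∀ x, |wt β ϖ x * f x| ≤ Mf * sqm x := hbf
  have hbg' : ∀ x, |wt β ϖ x * g x| ≤ Mg * sqm x := hbg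
  have hMf : 0 ≤ Mf := by
    have h := (abs_nonneg _).trans (hbf' 0)
    nlinarith [sqm_pos 0]
  have hMg : 0 ≤ Mg := by
    have h := (abs_nonneg _).trans (hbg' 0)
    nlinarith [sqm_pos 0]
  have hfb : ∀ x, wt β ϖ x * |f x| ≤ Mf * sqm x := fun x => by
    have h := hbf' x
    rwa [abs_mul, abs_of_pos (wt_pos hβ0 hϖ0' x)] at h
  have hgb : ∀ x, wt β ϖ x * |g x| ≤ Mg * sqm x := fun x => by
    have h := hbg' x
    rwa [abs_mul, abs_of_pos (wt_pos hβ0 hϖ0' x)] at h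
  have hf1 : ∀ x, |f x| ≤ Mf * sqm x := fun x => by
    have h := hfb x
    have hw := one_le_wt hβ0 hϖ0' x
    nlinarith [abs_nonneg (f x)]
  have hg1 : ∀ x, |g x| ≤ Mg * sqm x := fun x => by
    have h := hgb x
    have hw := one_le_wt hβ0 hϖ0' x
    nlinarith [abs_nonneg (g x)]
  -- difference bound without weight
  have hdiff : ∀ v u : V, ∀ ω : Metric.sphere (0:V) 1,
      |f (uPrime v u ω) * g (vPrime v u ω) - f u * g v| ≤ 2*Mf*Mg*(sqm u * sqm v) := by
    intro v u ω
    have e1 := hf1 (uPrime v u ω)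
    have e2 := hg1 (vPrime v u ω)
    have e3 := hf1 u
    have e4 := hg1 v
    have hsm := sqm_mul v u ω
    have s1 := sqm_pos (uPrime v u ω)
    have s2 := sqm_pos (vPrime v u ω)
    have s3 := sqm_pos u
    have s4 := sqm_pos v
    calc |f (uPrime v u ω) * g (vPrime v u ω) - f u * g v|
        ≤ |f (uPrime v u ω) * g (vPrime v u ω)| + |f u * g v| := abs_sub _ _
      _ = |f (uPrime v u ω)| * |g (vPrime v u ω)| + |f u| * |g v| := by
          rw [abs_mul, abs_mul]
      _ ≤ (Mf * sqm (uPrime v u ω)) * (Mg * sqm (vPrime v u ω)) + (Mf * sqm u) * (Mg * sqm v) :=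
          add_le_add
            (mul_le_mul e1 e2 (abs_nonneg _) (by nlinarith))
            (mul_le_mul e3 e4 (abs_nonneg _) (by nlinarith))
      _ = Mf*Mg*(sqm (uPrime v u ω) * sqm (vPrime v u ω)) + Mf*Mg*(sqm u * sqm v) := by ring
      _ = 2*Mf*Mg*(sqm u * sqm v) := by rw [hsm]; ring
  -- weighted difference bound
  have hdiffw : ∀ v u : V, ∀ ω : Metric.sphere (0:V) 1,
      wt β ϖ v * |f (uPrime v u ω) * g (vPrime v u ω) - f u * g v|
        ≤ 2*Mf*Mg*(sqm u * sqm v) := by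
    intro v u ω
    have t1 : wt β ϖ v * (|f (uPrime v u ω)| * |g (vPrime v u ω)|) ≤ Mf*Mg*(sqm u * sqm v) := by
      have hm := wt_le_mul hβ0 hϖ0' v u ω
      have p1 := hfb (uPrime v u ω)
      have p2 := hgb (vPrime v u ω)
      have hs := sqm_mul v u ω
      have w1 := wt_pos hβ0 hϖ0' (uPrime v u ω)
      have w2 := wt_pos hβ0 hϖ0' (vPrime v u ω)
      have s1 := sqm_pos (uPrime v u ω)
      have a1 := abs_nonneg (f (uPrime v u ω))
      have a2 := abs_nonneg (g (vPrime v u ω))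
      calc wt β ϖ v * (|f (uPrime v u ω)| * |g (vPrime v u ω)|)
          ≤ (wt β ϖ (uPrime v u ω) * wt β ϖ (vPrime v u ω))
              * (|f (uPrime v u ω)| * |g (vPrime v u ω)|) :=
            mul_le_mul_of_nonneg_right hm (by positivity)
        _ = (wt β ϖ (uPrime v u ω) * |f (uPrime v u ω)|)
              * (wt β ϖ (vPrime v u ω) * |g (vPrime v u ω)|) := by ring
        _ ≤ (Mf * sqm (uPrime v u ω)) * (Mg * sqm (vPrime v u ω)) :=
            mul_le_mul p1 p2 (mul_nonneg w2.le (abs_nonneg _)) (by nlinarith)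
        _ = Mf*Mg*(sqm (uPrime v u ω) * sqm (vPrime v u ω)) := by ring
        _ = Mf*Mg*(sqm u * sqm v) := by rw [hs]
    have t2 : wt β ϖ v * (|f u| * |g v|) ≤ Mf*Mg*(sqm u * sqm v) := by
      have p1 := hf1 u
      have p2 := hgb v
      have s3 := sqm_pos u
      calc wt β ϖ v * (|f u| * |g v|) = |f u| * (wt β ϖ v * |g v|) := by ring
        _ ≤ (Mf * sqm u) * (Mg * sqm v) :=
            mul_le_mul p1 p2 (mul_nonneg (wt_pos hβ0 hϖ0' v).le (abs_nonneg _)) (by nlinarith)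
        _ = Mf*Mg*(sqm u * sqm v) := by ring
    have habs : |f (uPrime v u ω) * g (vPrime v u ω) - f u * g v|
        ≤ |f (uPrime v u ω)| * |g (vPrime v u ω)| + |f u| * |g v| := by
      calc |f (uPrime v u ω) * g (vPrime v u ω) - f u * g v|
          ≤ |f (uPrime v u ω) * g (vPrime v u ω)| + |f u * g v| := abs_sub _ _
        _ = |f (uPrime v u ω)| * |g (vPrime v u ω)| + |f u| * |g v| := by rw [abs_mul, abs_mul]
    have hwv := wt_pos hβ0 hϖ0' v
    calc wt β ϖ v * |f (uPrime v u ω) * g (vPrime v u ω) - f u * g v|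
        ≤ wt β ϖ v * (|f (uPrime v u ω)| * |g (vPrime v u ω)| + |f u| * |g v|) :=
          mul_le_mul_of_nonneg_left habs hwv.le
      _ = wt β ϖ v * (|f (uPrime v u ω)| * |g (vPrime v u ω)|) + wt β ϖ v * (|f u| * |g v|) := by
          ring
      _ ≤ 2*Mf*Mg*(sqm u * sqm v) := by linarith
  -- product integrability
  have hIntProd : ∀ v : V, Integrable
      (fun p : V × Metric.sphere (0:V) 1 =>
        |⟪v - p.1, (p.2 : V)⟫| *
          (f (uPrime v p.1 p.2) * g (vPrime v p.1 p.2) - f p.1 * g v))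
      ((volume : Measure V).prod sphμ) := by
    intro v
    have hcont_in : Continuous fun p : V × Metric.sphere (0:V) 1 => ⟪v - p.1, (p.2:V)⟫ :=
      Continuous.inner (continuous_const.sub continuous_fst)
        (continuous_subtype_val.comp continuous_snd)
    have hcontU : Continuous fun p : V × Metric.sphere (0:V) 1 => uPrime v p.1 p.2 := by
      unfold uPrime
      exact (continuous_fst).add (hcont_in.smul (continuous_subtype_val.comp continuous_snd))
    have hcontV : Continuous fun p : V × Metric.sphere (0:V) 1 => vPrime v p.1 p.2 := by
      unfold vPrime
      exact continuous_const.sub (hcont_in.smul (continuous_subtype_val.comp continuous_snd))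
    have hmeas : AEStronglyMeasurable (fun p : V × Metric.sphere (0:V) 1 =>
        |⟪v - p.1, (p.2 : V)⟫| *
          (f (uPrime v p.1 p.2) * g (vPrime v p.1 p.2) - f p.1 * g v))
        ((volume : Measure V).prod sphμ) := by
      apply Measurable.aestronglyMeasurable
      exact (hcont_in.abs.measurable).mul
        (((hf.comp hcontU.measurable).mul (hg.comp hcontV.measurable)).sub
          ((hf.comp measurable_fst).mul measurable_const))
    have hFint : Integrable (fun u : V =>
        (2*Mf*Mg*sqm v*Real.sqrt ((2*π) ^ (-(3:ℝ)/2)))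
          * (‖v - u‖ * rexp (-((4:ℝ)⁻¹*‖u‖^2)))) :=
      (integrable_shift_gauss v quarter_pos').const_mul _
    have hDint : Integrable (fun p : V × Metric.sphere (0:V) 1 =>
        (2*Mf*Mg*sqm v*Real.sqrt ((2*π) ^ (-(3:ℝ)/2)))
          * (‖v - p.1‖ * rexp (-((4:ℝ)⁻¹*‖p.1‖^2)))) ((volume : Measure V).prod sphμ) := by
      have h := hFint.mul_prod (integrable_const (1:ℝ)) (ν := sphμ)
      simpa using h
    refine hDint.mono' hmeas (Filter.Eventually.of_forall fun p => ?_)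
    rw [Real.norm_eq_abs, abs_mul, abs_abs]
    have h1 : |⟪v - p.1, (p.2:V)⟫| ≤ ‖v - p.1‖ := by
      have h := abs_real_inner_le_norm (v - p.1) (p.2:V)
      rwa [sphere_norm_one, mul_one] at h
    have h2 := hdiff v p.1 p.2
    have hsq4 := sqm_eq4 p.1
    calc |⟪v - p.1, (p.2:V)⟫| * |f (uPrime v p.1 p.2) * g (vPrime v p.1 p.2) - f p.1 * g v|
        ≤ ‖v - p.1‖ * (2*Mf*Mg*(sqm p.1 * sqm v)) :=
          mul_le_mul h1 h2 (abs_nonneg _) (norm_nonneg _)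
      _ = (2*Mf*Mg*sqm v*Real.sqrt ((2*π) ^ (-(3:ℝ)/2)))
            * (‖v - p.1‖ * rexp (-((4:ℝ)⁻¹*‖p.1‖^2))) := by rw [hsq4]; ring
  refine ⟨hIntProd, ?_⟩
  -- main estimate
  intro v
  have hwv := wt_pos hβ0 hϖ0' v
  have hSv := sqm_pos v
  have hN := collFreq_pos v
  have hNe := collFreq_eq v
  have hH := Hfun_pos v
  -- inner integrand integrable over the sphere for each u, and inner integral bound
  have hInner : ∀ u : V,
      |∫ ω : Metric.sphere (0:V) 1,
          |⟪v - u, (ω : V)⟫| * (f (uPrime v u ω) * g (vPrime v u ω) - f u * g v) ∂sphμ|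
        ≤ (2*Mf*Mg*sqm v*κ*Real.sqrt ((2*π) ^ (-(3:ℝ)/2)) / wt β ϖ v)
            * (‖v - u‖ * rexp (-((4:ℝ)⁻¹*‖u‖^2))) := by
    intro u
    have hcontU : Continuous fun ω : Metric.sphere (0:V) 1 => uPrime v u ω := by
      unfold uPrime
      exact continuous_const.add ((cont_inner_sph (v - u)).smul continuous_subtype_val)
    have hcontV : Continuous fun ω : Metric.sphere (0:V) 1 => vPrime v u ω := by
      unfold vPrime
      exact continuous_const.sub ((cont_inner_sph (v - u)).smul continuous_subtype_val)
    have hmeas : AEStronglyMeasurable (fun ω : Metric.sphere (0:V) 1 =>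
        |⟪v - u, (ω : V)⟫| * (f (uPrime v u ω) * g (vPrime v u ω) - f u * g v)) sphμ := by
      apply Measurable.aestronglyMeasurable
      exact ((cont_inner_sph (v - u)).abs.measurable).mul
        (((hf.comp hcontU.measurable).mul (hg.comp hcontV.measurable)).sub measurable_const)
    have hIω : Integrable (fun ω : Metric.sphere (0:V) 1 =>
        |⟪v - u, (ω : V)⟫| * (f (uPrime v u ω) * g (vPrime v u ω) - f u * g v)) sphμ := by
      refine integrable_sph_of_bounded hmeas (‖v - u‖ * (2*Mf*Mg*(sqm u * sqm v))) fun ω => ?_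
      rw [abs_mul, abs_abs]
      have h1 : |⟪v - u, (ω:V)⟫| ≤ ‖v - u‖ := by
        have h := abs_real_inner_le_norm (v - u) (ω:V)
        rwa [sphere_norm_one, mul_one] at h
      exact mul_le_mul h1 (hdiff v u ω) (abs_nonneg _) (norm_nonneg _)
    have hBu : ∀ ω : Metric.sphere (0:V) 1,
        |⟪v - u, (ω : V)⟫| * |f (uPrime v u ω) * g (vPrime v u ω) - f u * g v|
          ≤ |⟪v - u, (ω : V)⟫| * (2*Mf*Mg*(sqm u * sqm v) / wt β ϖ v) := by
      intro ω
      refine mul_le_mul_of_nonneg_left ?_ (abs_nonneg _)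
      rw [le_div_iff₀ hwv]
      have h := hdiffw v u ω
      linarith [h]
    calc |∫ ω : Metric.sphere (0:V) 1,
            |⟪v - u, (ω : V)⟫| * (f (uPrime v u ω) * g (vPrime v u ω) - f u * g v) ∂sphμ|
        ≤ ∫ ω : Metric.sphere (0:V) 1,
            |(|⟪v - u, (ω : V)⟫| * (f (uPrime v u ω) * g (vPrime v u ω) - f u * g v))| ∂sphμ := by
          simpa only [Real.norm_eq_abs] using norm_integral_le_integral_norm (μ := sphμ)
            (fun ω : Metric.sphere (0:V) 1 =>
              |⟪v - u, (ω : V)⟫| * (f (uPrime v u ω) * g (vPrime v u ω) - f u * g v))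
      _ ≤ ∫ ω : Metric.sphere (0:V) 1,
            |⟪v - u, (ω : V)⟫| * (2*Mf*Mg*(sqm u * sqm v) / wt β ϖ v) ∂sphμ := by
          refine integral_mono hIω.abs ((integrable_abs_inner_sph (v - u)).mul_const _) fun ω => ?_
          show |(|⟪v - u, (ω : V)⟫| * _)| ≤ _
          rw [abs_mul, abs_abs]
          exact hBu ω
      _ = (∫ ω : Metric.sphere (0:V) 1, |⟪v - u, (ω : V)⟫| ∂sphμ)
            * (2*Mf*Mg*(sqm u * sqm v) / wt β ϖ v) := integral_mul_const _ _
      _ = (κ * ‖v - u‖) * (2*Mf*Mg*(sqm u * sqm v) / wt β ϖ v) := by rw [Ksph]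
      _ = (2*Mf*Mg*sqm v*κ*Real.sqrt ((2*π) ^ (-(3:ℝ)/2)) / wt β ϖ v)
            * (‖v - u‖ * rexp (-((4:ℝ)⁻¹*‖u‖^2))) := by
          rw [sqm_eq4 u]
          ring
  -- bound on Qop
  have hΦint : Integrable (fun u : V => ∫ ω : Metric.sphere (0:V) 1,
      |⟪v - u, (ω : V)⟫| * (f (uPrime v u ω) * g (vPrime v u ω) - f u * g v) ∂sphμ) :=
    (hIntProd v).integral_prod_left
  have hQb : |Qop f g v| ≤ (2*Mf*Mg*sqm v*κ*Real.sqrt ((2*π) ^ (-(3:ℝ)/2)) / wt β ϖ v)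
      * Gfun v := by
    calc |Qop f g v| ≤ ∫ u : V, |∫ ω : Metric.sphere (0:V) 1,
            |⟪v - u, (ω : V)⟫| * (f (uPrime v u ω) * g (vPrime v u ω) - f u * g v) ∂sphμ| := by
          simpa only [Real.norm_eq_abs, Qop] using norm_integral_le_integral_norm
            (μ := (volume : Measure V))
            (fun u : V => ∫ ω : Metric.sphere (0:V) 1,
              |⟪v - u, (ω : V)⟫| * (f (uPrime v u ω) * g (vPrime v u ω) - f u * g v) ∂sphμ)
      _ ≤ ∫ u : V, (2*Mf*Mg*sqm v*κ*Real.sqrt ((2*π) ^ (-(3:ℝ)/2)) / wt β ϖ v)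
            * (‖v - u‖ * rexp (-((4:ℝ)⁻¹*‖u‖^2))) := by
          refine integral_mono hΦint.abs
            ((integrable_shift_gauss v quarter_pos').const_mul _) fun u => ?_
          exact hInner u
      _ = (2*Mf*Mg*sqm v*κ*Real.sqrt ((2*π) ^ (-(3:ℝ)/2)) / wt β ϖ v) * Gfun v :=
          integral_const_mul _ _
  have hQb2 : |Qop f g v| ≤ (2*Mf*Mg*sqm v*κ*Real.sqrt ((2*π) ^ (-(3:ℝ)/2)) / wt β ϖ v)
      * (Crat * Hfun v) := by
    refine hQb.trans ?_
    refine mul_le_mul_of_nonneg_left (Gfun_le_Hfun v) ?_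
    refine div_nonneg ?_ hwv.le
    exact mul_nonneg (mul_nonneg (mul_nonneg (mul_nonneg (by linarith) hMg) hSv.le) hκ.le) hc4p.le
  -- conclude
  have hSrw : Real.sqrt (gaussM v) = sqm v := rfl
  rw [hSrw, abs_div, abs_mul, abs_mul, abs_inv, abs_of_pos hN, abs_of_pos hwv,
    abs_of_pos hSv]
  calc (collFreq v)⁻¹ * wt β ϖ v * |Qop f g v| / sqm v
      ≤ (collFreq v)⁻¹ * wt β ϖ v
          * ((2*Mf*Mg*sqm v*κ*Real.sqrt ((2*π) ^ (-(3:ℝ)/2)) / wt β ϖ v) * (Crat * Hfun v))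
          / sqm v := by
        gcongr
    _ = 2 * Real.sqrt ((2*π) ^ (-(3:ℝ)/2)) * Crat / (2*π) ^ (-(3:ℝ)/2) * Mf * Mg := by
        rw [hNe]
        set c2 : ℝ := (2*π) ^ (-(3:ℝ)/2) with hc2e
        set K : ℝ := κ with hKe
        set HH : ℝ := Hfun v with hHHe
        set W : ℝ := wt β ϖ v with hWe
        set S : ℝ := sqm v with hSe
        have h1 : K ≠ 0 := hκ.ne'
        have h2 : HH ≠ 0 := hH.ne'
        have h3 : W ≠ 0 := hwv.ne'
        have h4 : S ≠ 0 := hSv.ne'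
        have h5 : c2 ≠ 0 := hc2p.ne'
        field_simp

end
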